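/- Cauchy–Schwarz bound for uniform integrability: if (X_n) is bounded in L², i.e., for each φ there is M_φ with q_φ(X_n) := (φ(F(|X_n|²)))^{1/2} ≤ M_φ for all n, and if q_φ(P_{(|X_n| > λe)} e) → 0 uniformly in n as λ → ∞ for each φ, then (X_n) is L¹-uniformly integrable, via the inequality p_φ(P|X_n|) ≤ q_φ(Pe)·q_φ(X_n) for any band projection P. -/

import Mathlib

variable {E : Type*} [CommRing E] [Lattice E]
  [CovariantClass E E (· + ·) (· ≤ ·)] [Algebra ℝ E]

/-- `E` is Dedekind complete. -/
def DedekindComplete (E : Type*) [AddCommGroup E] [Lattice E] : Prop :=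
  ∀ A : Set E, A.Nonempty → BddAbove A → ∃ s, IsLUB A s

/-- `e` is a weak order unit. -/
def IsWeakUnit (e : E) : Prop :=
  0 < e ∧ ∀ x : E, 0 ≤ x → IsLUB (Set.range fun n : ℕ => x ⊓ n • e) x

/-- A band (order) projection. -/
def IsBandProj (P : E →ₗ[ℝ] E) : Prop :=
  (∀ x, P (P x) = P x) ∧ ∀ x : E, 0 ≤ x → 0 ≤ P x ∧ P x ≤ x

/-- `P` is the band projection onto the band generated by `u ≥ 0`. -/
def IsProjOnBandGen (P : E →ₗ[ℝ] E) (u : E) : Prop :=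
  IsBandProj P ∧ ∀ x : E, 0 ≤ x → IsLUB (Set.range fun n : ℕ => x ⊓ n • u) (P x)

/-- A conditional expectation with respect to the weak order unit `e`. -/
def IsCondExp (e : E) (F : E →ₗ[ℝ] E) : Prop :=
  (∀ x, F (F x) = F x) ∧ (∀ x : E, 0 < x → 0 < F x) ∧ F e = e ∧
  ∀ V : ℕ → E, Antitone V → IsGLB (Set.range V) 0 →
    IsGLB (Set.range fun n => F (V n)) 0

/-- A positive, normalized, order continuous functional. -/
def IsNormedFunctional (e : E) (φ : E →ₗ[ℝ] ℝ) : Prop :=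
  (∀ x : E, 0 ≤ x → 0 ≤ φ x) ∧ φ e = 1 ∧
  ∀ V : ℕ → E, Antitone V → IsGLB (Set.range V) 0 →
    Filter.Tendsto (fun n => φ (V n)) Filter.atTop (nhds 0)

/-- `Φ` is a separating family of normalized positive order continuous functionals. -/
def IsSeparatingFamily (e : E) (Φ : Set (E →ₗ[ℝ] ℝ)) : Prop :=
  (∀ φ ∈ Φ, IsNormedFunctional e φ) ∧ ∀ x : E, (∀ φ ∈ Φ, φ x = 0) → x = 0

/-- `L¹`-uniform integrability. -/
def UnifInt (F : E →ₗ[ℝ] E) (Φ : Set (E →ₗ[ℝ] ℝ)) (X : ℕ → E)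
    (P : ℕ → ℝ → (E →ₗ[ℝ] E)) : Prop :=
  ∀ φ ∈ Φ, ∀ ε : ℝ, 0 < ε → ∃ l₀ : ℝ, ∀ l : ℝ, l₀ ≤ l → ∀ n : ℕ,
    φ (F (P n l |X n|)) < ε

/-- The `L²`-seminorm `q_φ(X) = (φ(F(|X|²)))^{1/2}`, the square taken in the
`f`-algebra structure of `E` (with unit `1`). -/
noncomputable def qSemi (F : E →ₗ[ℝ] E) (φ : E →ₗ[ℝ] ℝ) (X : E) : ℝ :=
  Real.sqrt (φ (F (|X| * |X|)))


set_option linter.unusedSectionVars false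
set_option linter.unusedVariables false
set_option maxHeartbeats 1000000

section AuxLemmas
variable {E : Type*} [CommRing E] [Lattice E]
  [CovariantClass E E (· + ·) (· ≤ ·)] [Algebra ℝ E]
  [CovariantClass E E (· + ·) (· ≤ ·)] [Algebra ℝ E]

lemma aux_inf_add_le (a b d : E) (ha : 0 ≤ a) (hb : 0 ≤ b) (hd : 0 ≤ d) :
    (a + b) ⊓ d ≤ a ⊓ d + b ⊓ d := by
  have h1 : (a + b) ⊓ d ≤ a + b ⊓ d := by
    have h := inf_le_inf_left (a + b) (le_add_of_nonneg_left (a := d) ha)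
    rwa [← add_inf] at h
  have h2 : (a + b) ⊓ d ≤ d + b ⊓ d :=
    le_trans inf_le_right (le_add_of_nonneg_right (le_inf hb hd))
  calc (a + b) ⊓ d ≤ (a + b ⊓ d) ⊓ (d + b ⊓ d) := le_inf h1 h2
    _ = a ⊓ d + b ⊓ d := by rw [← inf_add]

lemma aux_disj_nsmul (a d : E) (ha : 0 ≤ a) (hd : 0 ≤ d) (h : a ⊓ d = 0) :
    ∀ m : ℕ, (m • a) ⊓ d = 0 := by
  intro m
  induction m with
  | zero => simpa using inf_eq_left.mpr hd
  | succ n ih =>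
    refine le_antisymm ?_ (le_inf (nsmul_nonneg ha _) hd)
    calc ((n+1) • a) ⊓ d = (n • a + a) ⊓ d := by rw [succ_nsmul]
      _ ≤ (n • a) ⊓ d + a ⊓ d := aux_inf_add_le _ _ _ (nsmul_nonneg ha n) ha hd
      _ = 0 := by rw [ih, h, add_zero]

lemma aux_nsmul_reflect (x : E) (m : ℕ) (h : 0 ≤ (m + 1) • x) : 0 ≤ x := by
  have hpn := posPart_inf_negPart_eq_zero x
  have hx := posPart_sub_negPart x
  have hle : (m + 1) • x⁻ ≤ (m + 1) • x⁺ := by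
    have heq : (m+1) • x⁺ - (m+1) • x⁻ = (m+1) • x := by rw [← smul_sub, hx]
    have h' := h; rw [← heq] at h'
    exact sub_nonneg.mp h'
  have h1 : x⁻ ≤ (m + 1) • x⁺ := by
    calc x⁻ = 1 • x⁻ := (one_nsmul _).symm
      _ ≤ (m+1) • x⁻ := nsmul_le_nsmul_left (negPart_nonneg x) (Nat.succ_le_succ (Nat.zero_le m))
      _ ≤ (m+1) • x⁺ := hle
  have h2 : ((m+1) • x⁺) ⊓ x⁻ = 0 :=
    aux_disj_nsmul x⁺ x⁻ (posPart_nonneg x) (negPart_nonneg x) hpn _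
  have h3 : x⁻ = 0 := by
    have : x⁻ ⊓ ((m+1) • x⁺) = x⁻ := inf_eq_left.mpr h1
    rw [inf_comm] at this
    rw [← this, h2]
  rw [← hx, h3, sub_zero]
  exact (posPart_nonneg x)

lemma aux_disj_bounded_mul (hmul : ∀ x y : E, 0 ≤ x → 0 ≤ y → 0 ≤ x * y)
    (a b : E) (k : ℕ) (ha : 0 ≤ a) (hb : 0 ≤ b) (hab : a ⊓ b = 0)
    (hak : a ≤ k • (1 : E)) (hbk : b ≤ k • (1 : E)) : a * b = 0 := by
  have h1 : a * b ≤ k • b := by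
    have h := hmul (k • (1:E) - a) b (sub_nonneg.mpr hak) hb
    rw [sub_mul, smul_mul_assoc, one_mul] at h
    exact sub_nonneg.mp h
  have h2 : a * b ≤ k • a := by
    have h := hmul a (k • (1:E) - b) ha (sub_nonneg.mpr hbk)
    rw [mul_sub, mul_smul_comm, mul_one] at h
    exact sub_nonneg.mp h
  have hd1 : (k • a) ⊓ b = 0 := aux_disj_nsmul a b ha hb hab k
  have hd2 : (k • b) ⊓ (k • a) = 0 :=
    aux_disj_nsmul b (k • a) hb (nsmul_nonneg ha k) (by rw [inf_comm]; exact hd1) k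
  refine le_antisymm ?_ (hmul a b ha hb)
  calc a * b ≤ (k • b) ⊓ (k • a) := le_inf h1 h2
    _ = 0 := hd2

lemma aux_sq_nonneg (hmul : ∀ x y : E, 0 ≤ x → 0 ≤ y → 0 ≤ x * y)
    (h01 : (0:E) ≤ 1) (x : E) (k : ℕ)
    (hl : -(k • (1:E)) ≤ x) (hu : x ≤ k • (1:E)) : 0 ≤ x * x := by
  have hk1 : (0:E) ≤ k • (1:E) := nsmul_nonneg h01 k
  have hp : x⁺ ≤ k • (1:E) := by
    rw [posPart_def]; exact sup_le hu hk1
  have hn : x⁻ ≤ k • (1:E) := by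
    rw [negPart_def]; exact sup_le (by rwa [neg_le]) hk1
  have hpn : x⁺ * x⁻ = 0 :=
    aux_disj_bounded_mul hmul _ _ k (posPart_nonneg x) (negPart_nonneg x)
      (posPart_inf_negPart_eq_zero x) hp hn
  have hxid : x * x = x⁺ * x⁺ + x⁻ * x⁻ - 2 * (x⁺ * x⁻) := by
    have hx := posPart_sub_negPart x
    calc x * x = (x⁺ - x⁻) * (x⁺ - x⁻) := by rw [hx]
      _ = x⁺ * x⁺ + x⁻ * x⁻ - 2 * (x⁺ * x⁻) := by ring
  rw [hxid, hpn]
  have := add_nonneg (hmul _ _ (posPart_nonneg x) (posPart_nonneg x))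
    (hmul _ _ (negPart_nonneg x) (negPart_nonneg x))
  simpa using this

lemma aux_inf_le_zero_of_isLUB {f : ℕ → E} {s d : E}
    (hs : IsLUB (Set.range f) s) (h : ∀ m, d ⊓ f m ≤ 0) : d ⊓ s ≤ 0 := by
  have hkey : ∀ m, f m ≤ s - d ⊓ s := by
    intro m
    have hfm : f m ≤ s := hs.1 ⟨m, rfl⟩
    have hstep : d ⊓ s + f m ≤ d ⊓ f m + s := by
      calc d ⊓ s + f m = (d + f m) ⊓ (s + f m) := by rw [inf_add]
        _ ≤ (d + s) ⊓ (s + f m) := inf_le_inf (add_le_add_right hfm d) le_rfl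
        _ = (d + s) ⊓ (f m + s) := by rw [add_comm s (f m)]
        _ = d ⊓ f m + s := by rw [inf_add]
    have : d ⊓ s + f m ≤ s := hstep.trans (by simpa using add_le_add_right (h m) s)
    rw [le_sub_iff_add_le, add_comm]
    exact this
  have hss : s ≤ s - d ⊓ s := hs.2 (by rintro x ⟨m, rfl⟩; exact hkey m)
  have := sub_le_sub_left hss (s)
  rwa [sub_sub_cancel, sub_self] at this


/-- Cauchy–Schwarz for `φ ∘ F` on bounded nonnegative elements. -/
lemma aux_CS (hmul : ∀ x y : E, 0 ≤ x → 0 ≤ y → 0 ≤ x * y)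
    (h01 : (0:E) ≤ 1) (F : E →ₗ[ℝ] E) (φ : E →ₗ[ℝ] ℝ)
    (hφF : ∀ x : E, 0 ≤ x → 0 ≤ φ (F x))
    (c y : E) (k : ℕ) (hc : 0 ≤ c) (hy : 0 ≤ y)
    (hck : c ≤ k • (1:E)) (hyk : y ≤ k • (1:E)) :
    φ (F (c * y)) ≤ Real.sqrt (φ (F (c * c))) * Real.sqrt (φ (F (y * y))) := by
  set A := φ (F (c*c)) with hAdef
  set B := φ (F (c*y)) with hBdef
  set C := φ (F (y*y)) with hCdef
  have hA : 0 ≤ A := hφF _ (hmul c c hc hc)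
  have hB : 0 ≤ B := hφF _ (hmul c y hc hy)
  have hC : 0 ≤ C := hφF _ (hmul y y hy hy)
  have hexp : ∀ t : ℝ, φ (F ((t • c - y) * (t • c - y))) = A*(t*t) + (-(2*B))*t + C := by
    intro t
    have hEid : (t • c - y) * (t • c - y) = (t*t) • (c*c) - (2*t) • (c*y) + y*y := by
      rw [sub_mul, mul_sub, mul_sub, smul_mul_assoc, smul_mul_assoc, mul_smul_comm,
        mul_smul_comm, smul_smul, mul_comm y c]
      module
    rw [hEid]
    simp only [map_add, map_sub, map_smul, smul_eq_mul]
    rw [← hAdef, ← hBdef, ← hCdef]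
    ring
  have hRat : ∀ q : ℚ, 0 ≤ A*(((q:ℝ))*((q:ℝ))) + (-(2*B))*(q:ℝ) + C := by
    intro q
    rw [← hexp]
    apply hφF
    set z := (q:ℝ) • c - y with hzdef
    set N := q.num.natAbs with hNdef
    have hden : ((q.den:ℝ)) * (q:ℝ) = ((q.num:ℤ):ℝ) := by
      have h : (q : ℚ) * (q.den : ℚ) = (q.num : ℚ) := by exact_mod_cast Rat.mul_den_eq_num q
      have h2 : (q:ℝ) * (q.den:ℝ) = ((q.num:ℤ):ℝ) := by exact_mod_cast h
      linarith
    have hwz : (q.den • z) = q.num • c - q.den • y := by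
      calc q.den • z = ((q.den:ℝ)) • z := (Nat.cast_smul_eq_nsmul ℝ _ _).symm
        _ = ((q.den:ℝ)) • ((q:ℝ) • c) - ((q.den:ℝ)) • y := by rw [hzdef, smul_sub]
        _ = (((q.den:ℝ))*(q:ℝ)) • c - ((q.den:ℝ)) • y := by rw [smul_smul]
        _ = q.num • c - q.den • y := by
            rw [hden, Int.cast_smul_eq_zsmul ℝ, Nat.cast_smul_eq_nsmul ℝ]
    have hNc : N • c ≤ (N*k) • (1:E) := by
      calc N • c ≤ N • (k • (1:E)) := nsmul_le_nsmul_right hck N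
        _ = (N*k) • (1:E) := smul_smul N k (1:E)
    have hzc_ub : q.num • c ≤ (N*k) • (1:E) := by
      rcases Int.natAbs_eq q.num with h | h
      · rw [h, natCast_zsmul]; exact hNc
      · rw [h, neg_zsmul, natCast_zsmul]
        exact le_trans (neg_nonpos.mpr (nsmul_nonneg hc N)) (nsmul_nonneg h01 _)
    have hzc_lb : -((N*k) • (1:E)) ≤ q.num • c := by
      rcases Int.natAbs_eq q.num with h | h
      · rw [h, natCast_zsmul]
        exact le_trans (neg_nonpos.mpr (nsmul_nonneg h01 _)) (nsmul_nonneg hc N)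
      · rw [h, neg_zsmul, natCast_zsmul]
        have := sub_nonneg.mpr hNc
        have h2 : -((N*k) • (1:E)) + ((N*k) • (1:E) - N • c) = -(N • c) := by abel
        calc -((N*k) • (1:E)) ≤ -((N*k) • (1:E)) + ((N*k) • (1:E) - N • c) := le_add_of_nonneg_right this
          _ = -(N • c) := h2
    have hy_ub : q.den • y ≤ (q.den*k) • (1:E) := by
      calc q.den • y ≤ q.den • (k • (1:E)) := nsmul_le_nsmul_right hyk q.den
        _ = (q.den*k) • (1:E) := smul_smul q.den k (1:E)
    have hy_lb : (0:E) ≤ q.den • y := nsmul_nonneg hy _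
    set m := N*k + q.den*k with hmdef
    have hm_ub : q.den • z ≤ m • (1:E) := by
      rw [hwz]
      calc q.num • c - q.den • y ≤ (N*k)•(1:E) - 0 := sub_le_sub hzc_ub hy_lb
        _ = (N*k)•(1:E) := sub_zero _
        _ ≤ m • (1:E) := nsmul_le_nsmul_left h01 (Nat.le_add_right _ _)
    have hm_lb : -(m • (1:E)) ≤ q.den • z := by
      rw [hwz]
      calc -(m • (1:E)) = -((N*k)•(1:E)) - (q.den*k)•(1:E) := by
            rw [hmdef, add_nsmul]; abel
        _ ≤ q.num • c - q.den • y := sub_le_sub hzc_lb hy_ub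
    have hw2 : 0 ≤ (q.den • z) * (q.den • z) := aux_sq_nonneg hmul h01 _ m hm_lb hm_ub
    have hsq : (q.den • z) * (q.den • z) = (q.den * q.den) • (z*z) := by
      rw [smul_mul_assoc, mul_smul_comm, smul_smul]
    obtain ⟨j, hj⟩ : ∃ j, q.den * q.den = j + 1 := ⟨q.den*q.den - 1, (Nat.succ_pred_eq_of_pos (Nat.mul_pos q.pos q.pos)).symm⟩
    refine aux_nsmul_reflect _ j ?_
    rw [← hj, ← hsq]; exact hw2
  have hAll : ∀ t : ℝ, 0 ≤ A*(t*t) + (-(2*B))*t + C := by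
    have hclosed : IsClosed {t : ℝ | 0 ≤ A*(t*t) + (-(2*B))*t + C} :=
      isClosed_le continuous_const (by fun_prop)
    have hsub : Set.range ((↑) : ℚ → ℝ) ⊆ {t : ℝ | 0 ≤ A*(t*t) + (-(2*B))*t + C} := by
      rintro _ ⟨q, rfl⟩; exact hRat q
    have hdense : Dense {t : ℝ | 0 ≤ A*(t*t) + (-(2*B))*t + C} :=
      Rat.denseRange_cast.mono hsub
    intro t
    have huniv : {t : ℝ | 0 ≤ A*(t*t) + (-(2*B))*t + C} = Set.univ := by
      rw [← hclosed.closure_eq, hdense.closure_eq]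
    exact (huniv ▸ Set.mem_univ t : t ∈ {t : ℝ | 0 ≤ A*(t*t) + (-(2*B))*t + C})
  have hdis := discrim_le_zero hAll
  rw [discrim] at hdis
  have hB2 : B^2 ≤ A*C := by nlinarith [hdis]
  have hle : B ≤ Real.sqrt (A*C) := by
    rw [Real.le_sqrt hB (mul_nonneg hA hC)]
    exact hB2
  calc B ≤ Real.sqrt (A*C) := hle
    _ = Real.sqrt A * Real.sqrt C := Real.sqrt_mul hA C


/-- For `0 ≤ y ≤ k•1` and a band projection `Pn` onto the band generated by `u ≥ 0`,
`Pn y ≤ Pn 1 * y`. -/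
lemma aux_proj_le (hmul : ∀ x y : E, 0 ≤ x → 0 ≤ y → 0 ≤ x * y)
    (h01 : (0:E) ≤ 1) {Pn : E →ₗ[ℝ] E} {u : E} (hu : 0 ≤ u)
    (hPn : IsProjOnBandGen Pn u) {y : E} (k : ℕ) (hy : 0 ≤ y)
    (hyk : y ≤ k • (1:E)) : Pn y ≤ Pn 1 * y := by
  obtain ⟨⟨hid, hpos⟩, hband⟩ := hPn
  set c := Pn 1 with hcdef
  have hc0 : 0 ≤ c := (hpos 1 h01).1
  have hc1 : c ≤ 1 := (hpos 1 h01).2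
  have hd0 : (0:E) ≤ 1 - c := sub_nonneg.mpr hc1
  have hlub1 : IsLUB (Set.range fun m : ℕ => 1 ⊓ m • u) c := hband 1 h01
  have hstep2 : (1 - c) ⊓ u = 0 := by
    set s := (1 - c) ⊓ u with hsdef
    have hs0 : 0 ≤ s := le_inf hd0 hu
    have hub : ∀ m : ℕ, (1 ⊓ m • u) + s ≤ c := by
      intro m
      have hmem : (1:E) ⊓ m • u ≤ c := hlub1.1 ⟨m, rfl⟩
      have h1 : (1 ⊓ m • u) + s ≤ 1 := by
        have hss : s ≤ 1 - (1 ⊓ m • u) :=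
          le_trans inf_le_left (sub_le_sub_left hmem 1)
        calc (1 ⊓ m • u) + s ≤ (1 ⊓ m • u) + (1 - (1 ⊓ m • u)) := add_le_add_right hss _
          _ = 1 := by abel
      have h2 : (1 ⊓ m • u) + s ≤ (m+1) • u := by
        calc (1 ⊓ m • u) + s ≤ m • u + u := add_le_add inf_le_right inf_le_right
          _ = (m+1) • u := (succ_nsmul u m).symm
      exact le_trans (le_inf h1 h2) (hlub1.1 ⟨m+1, rfl⟩)
    have hcs : c ≤ c - s := by
      refine hlub1.2 ?_
      rintro x ⟨m, rfl⟩
      exact le_sub_iff_add_le.mpr (hub m)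
    have hsle : s ≤ 0 := by
      have h := sub_le_sub_left hcs c
      rwa [sub_sub_cancel, sub_self] at h
    exact le_antisymm hsle hs0
  have hPy0 : 0 ≤ Pn y := (hpos y hy).1
  have hstep3 : Pn y ⊓ (1 - c) = 0 := by
    have hluby : IsLUB (Set.range fun m : ℕ => y ⊓ m • u) (Pn y) := hband y hy
    have hm : ∀ m : ℕ, (1 - c) ⊓ (y ⊓ m • u) ≤ 0 := by
      intro m
      have h1 : (m • u) ⊓ (1-c) = 0 :=
        aux_disj_nsmul u (1-c) hu hd0 (by rw [inf_comm]; exact hstep2) m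
      calc (1-c) ⊓ (y ⊓ m • u) ≤ (1-c) ⊓ (m • u) := inf_le_inf_left _ inf_le_right
        _ = 0 := by rw [inf_comm]; exact h1
    have h := aux_inf_le_zero_of_isLUB hluby hm
    exact le_antisymm (by rw [inf_comm]; exact h) (le_inf hPy0 hd0)
  have h1le : (1:E) ≤ (k+1) • (1:E) := by
    calc (1:E) = 1 • (1:E) := (one_nsmul _).symm
      _ ≤ (k+1) • (1:E) := nsmul_le_nsmul_left h01 (Nat.succ_le_succ (Nat.zero_le k))
  have hmul0 : Pn y * (1 - c) = 0 := by
    refine aux_disj_bounded_mul hmul _ _ (k+1) hPy0 hd0 hstep3 ?_ ?_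
    · exact le_trans (hpos y hy).2 (le_trans hyk
        (nsmul_le_nsmul_left h01 (Nat.le_succ k)))
    · exact le_trans (le_trans (sub_le_self 1 hc0) le_rfl) h1le
  have hPyc : Pn y = Pn y * c := by
    have h := hmul0
    rw [mul_sub, mul_one, sub_eq_zero] at h
    exact h
  rw [hPyc]
  have h := hmul (y - Pn y) c (sub_nonneg.mpr (hpos y hy).2) hc0
  rw [sub_mul] at h
  have := sub_nonneg.mp h
  calc Pn y * c ≤ y * c := this
    _ = c * y := mul_comm y c

end AuxLemmas

/-- A sequence bounded in `L²` whose tail projections are uniformly small in the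
`q_φ` seminorms is `L¹`-uniformly integrable (Cauchy–Schwarz bound). -/
theorem unifInt_of_L2_bounded
    (hE : DedekindComplete E)
    (hmul : ∀ x y : E, 0 ≤ x → 0 ≤ y → 0 ≤ x * y)
    (he : IsWeakUnit (1 : E))
    (F : E →ₗ[ℝ] E) (hF : IsCondExp (1 : E) F)
    (Φ : Set (E →ₗ[ℝ] ℝ)) (hΦ : IsSeparatingFamily (1 : E) Φ)
    (X : ℕ → E) (P : ℕ → ℝ → (E →ₗ[ℝ] E))
    (hP : ∀ n (l : ℝ), IsProjOnBandGen (P n l) ((|X n| - l • (1 : E)) ⊔ 0))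
    (hbdd : ∀ φ ∈ Φ, ∃ M : ℝ, ∀ n, qSemi F φ (X n) ≤ M)
    (hsmall : ∀ φ ∈ Φ, ∀ ε : ℝ, 0 < ε → ∃ l₀ : ℝ, ∀ l : ℝ, l₀ ≤ l → ∀ n,
      qSemi F φ (P n l (1 : E)) < ε) :
    UnifInt F Φ X P := by
  intro φ hφmem ε hε
  have hφ : IsNormedFunctional (1:E) φ := hΦ.1 φ hφmem
  have h01 : (0:E) ≤ 1 := he.1.le
  -- positivity of F
  have hFpos : ∀ x : E, 0 ≤ x → 0 ≤ F x := by
    intro x hx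
    rcases hx.lt_or_eq with h | h
    · exact (hF.2.1 x h).le
    · rw [← h, map_zero]
  have hφF : ∀ x : E, 0 ≤ x → 0 ≤ φ (F x) := fun x hx => hφ.1 _ (hFpos x hx)
  have hφFmono : ∀ x y : E, x ≤ y → φ (F x) ≤ φ (F y) := by
    intro x y hxy
    have := hφF (y - x) (sub_nonneg.mpr hxy)
    rw [map_sub, map_sub] at this
    linarith
  obtain ⟨M, hM⟩ := hbdd φ hφmem
  have hM0 : 0 ≤ M := le_trans (Real.sqrt_nonneg _) (hM 0)
  set ε' := ε / (M + 1) with hε'def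
  have hε' : 0 < ε' := div_pos hε (by linarith)
  obtain ⟨l₀, hl₀⟩ := hsmall φ hφmem ε' hε'
  refine ⟨l₀, fun l hl n => ?_⟩
  set Y := |X n| with hYdef
  have hY0 : 0 ≤ Y := abs_nonneg _
  set u := (|X n| - l • (1:E)) ⊔ 0 with hudef
  have hu0 : 0 ≤ u := le_sup_right
  have hPn := hP n l
  set c := P n l 1 with hcdef
  have hc0 : 0 ≤ c := (hPn.1.2 1 h01).1
  have hc1 : c ≤ 1 := (hPn.1.2 1 h01).2
  have hqc : Real.sqrt (φ (F (c * c))) < ε' := by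
    have h := hl₀ l hl n
    rwa [qSemi, abs_of_nonneg hc0] at h
  -- key bound for each truncation level k
  have key : ∀ k : ℕ, φ (F (P n l Y)) ≤ ε' * M + φ (F (Y - Y ⊓ k • (1:E))) := by
    intro k
    set y := Y ⊓ k • (1:E) with hydef
    have hy0 : 0 ≤ y := le_inf hY0 (nsmul_nonneg h01 k)
    have hyk : y ≤ k • (1:E) := inf_le_right
    have hyY : y ≤ Y := inf_le_left
    have hsplit : P n l Y = P n l y + P n l (Y - y) := by
      rw [← map_add]; congr 1; abel
    have hYy0 : 0 ≤ Y - y := sub_nonneg.mpr hyY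
    -- first piece
    have h1 : φ (F (P n l y)) ≤ ε' * M := by
      have hproj : P n l y ≤ c * y := aux_proj_le hmul h01 hu0 hPn k hy0 hyk
      have hyk1 : y ≤ (k+1) • (1:E) :=
        hyk.trans (nsmul_le_nsmul_left h01 (Nat.le_succ k))
      have hck1 : c ≤ (k+1) • (1:E) := by
        calc c ≤ 1 := hc1
          _ = 1 • (1:E) := (one_nsmul _).symm
          _ ≤ (k+1) • (1:E) := nsmul_le_nsmul_left h01 (Nat.succ_le_succ (Nat.zero_le k))
      have hcs := aux_CS hmul h01 F φ hφF c y (k+1) hc0 hy0 hck1 hyk1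
      have hyy : Real.sqrt (φ (F (y * y))) ≤ qSemi F φ (X n) := by
        rw [qSemi, ← hYdef]
        apply Real.sqrt_le_sqrt
        apply hφFmono
        calc y * y ≤ Y * y := by
              have h := hmul (Y - y) y (sub_nonneg.mpr hyY) hy0
              rw [sub_mul] at h; exact sub_nonneg.mp h
          _ = y * Y := mul_comm Y y
          _ ≤ Y * Y := by
              have h := hmul (Y - y) Y (sub_nonneg.mpr hyY) hY0
              rw [sub_mul] at h; exact sub_nonneg.mp h
      calc φ (F (P n l y)) ≤ φ (F (c * y)) := hφFmono _ _ hproj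
        _ ≤ Real.sqrt (φ (F (c * c))) * Real.sqrt (φ (F (y * y))) := hcs
        _ ≤ ε' * M := by
            apply mul_le_mul hqc.le (hyy.trans (hM n)) (Real.sqrt_nonneg _) hε'.le
    have h2 : φ (F (P n l (Y - y))) ≤ φ (F (Y - y)) :=
      hφFmono _ _ ((hPn.1.2 (Y - y) hYy0).2)
    calc φ (F (P n l Y)) = φ (F (P n l y)) + φ (F (P n l (Y - y))) := by
          rw [hsplit, map_add, map_add]
      _ ≤ ε' * M + φ (F (Y - y)) := add_le_add h1 h2
  -- the truncation error tends to zero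
  set V : ℕ → E := fun k => Y - Y ⊓ k • (1:E) with hVdef
  have hVant : Antitone V := by
    intro a b hab
    exact sub_le_sub_left (inf_le_inf_left Y (nsmul_le_nsmul_left h01 hab)) Y
  have hVglb : IsGLB (Set.range V) 0 := by
    have hlubY := he.2 Y hY0
    constructor
    · rintro x ⟨k, rfl⟩
      exact sub_nonneg.mpr inf_le_left
    · intro b hb
      have hub : ∀ k : ℕ, Y ⊓ k • (1:E) ≤ Y - b := by
        intro k
        have := hb ⟨k, rfl⟩
        exact le_sub_comm.mp this
      have : Y ≤ Y - b := hlubY.2 (by rintro x ⟨k, rfl⟩; exact hub k)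
      exact (le_sub_self_iff Y).mp this
  have hFVglb := hF.2.2.2 V hVant hVglb
  have hFVant : Antitone fun k => F (V k) := by
    intro a b hab
    have := hFpos (V a - V b) (sub_nonneg.mpr (hVant hab))
    rw [map_sub] at this
    exact sub_nonneg.mp this
  have htend := hφ.2.2 (fun k => F (V k)) hFVant hFVglb
  have hfin : φ (F (P n l Y)) - ε' * M ≤ 0 := by
    refine ge_of_tendsto htend (Filter.Eventually.of_forall fun k => ?_)
    have hk := key k
    simp only [hVdef]
    linarith
  have hlt : ε' * M < ε := by
    rw [hε'def, div_mul_eq_mul_div, div_lt_iff₀ (by linarith : (0:ℝ) < M + 1)]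
    nlinarith
  linarith
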